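/- Let δ > 0, λ, α₁ ∈ ℝ, and w₀ ∈ ℂ. Define φ(t) = ∫₀ᵗ f_δ(|w₀|²·e^{−2α₁ s}) ds and w(t) = exp(−α₁·t + i·λ·φ(t))·w₀. Then w(0) = w₀, |w(t)| = e^{−α₁ t}·|w₀| for all t, and for every t ∈ ℝ the function w has derivative i·λ·f_δ(|w(t)|²)·w(t) − α₁·w(t) at t; that is, w is a global solution of the damped regularized logarithmic ODE dw = i·λ·f_δ(|w|²)·w dt − α₁·w dt with initial datum w₀. -/

import Mathlib

/-- The regularized logarithmic nonlinearity `f_δ(r) = log((δ + r)/(1 + δ r))`. -/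
noncomputable def fReg (δ r : ℝ) : ℝ := Real.log ((δ + r) / (1 + δ * r))

/-- Explicit global solution of the damped regularized logarithmic ODE
`dw = i λ f_δ(|w|²) w dt − α₁ w dt`: with
`φ(t) = ∫₀ᵗ f_δ(|w₀|² e^{−2α₁ s}) ds` and `w(t) = exp(−α₁ t + i λ φ(t)) w₀`,
we have `w(0) = w₀`, `|w(t)| = e^{−α₁ t} |w₀|`, and
`w'(t) = i λ f_δ(|w(t)|²) w(t) − α₁ w(t)` for every `t`. -/
theorem regularized_log_ODE_solution (δ lam α₁ : ℝ) (hδ : 0 < δ) (w₀ : ℂ)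
    (φ : ℝ → ℝ)
    (hφ : ∀ t : ℝ, φ t = ∫ s in (0 : ℝ)..t, fReg δ (‖w₀‖ ^ 2 * Real.exp (-2 * α₁ * s)))
    (w : ℝ → ℂ)
    (hw : ∀ t : ℝ, w t = Complex.exp ((-α₁ * t : ℝ) + Complex.I * (lam : ℂ) * (φ t : ℂ)) * w₀) :
    w 0 = w₀ ∧
    (∀ t : ℝ, ‖w t‖ = Real.exp (-α₁ * t) * ‖w₀‖) ∧
    ∀ t : ℝ, HasDerivAt w
      (Complex.I * (lam : ℂ) * (fReg δ (‖w t‖ ^ 2) : ℂ) * w t - (α₁ : ℂ) * w t) t := by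
  -- norm of w
  have hnorm : ∀ t : ℝ, ‖w t‖ = Real.exp (-α₁ * t) * ‖w₀‖ := by
    intro t
    rw [hw t, norm_mul, Complex.norm_exp]
    congr 2
    simp
  refine ⟨?_, hnorm, ?_⟩
  · have h0 : φ 0 = 0 := by rw [hφ 0, intervalIntegral.integral_same]
    rw [hw 0, h0]
    simp
  · intro t
    set g : ℝ → ℝ := fun s => fReg δ (‖w₀‖ ^ 2 * Real.exp (-2 * α₁ * s)) with hg
    have hr : ∀ s : ℝ, 0 ≤ ‖w₀‖ ^ 2 * Real.exp (-2 * α₁ * s) := fun s =>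
      mul_nonneg (by positivity) (Real.exp_pos _).le
    have hgcont : Continuous g := by
      apply Continuous.log
      · apply Continuous.div
        · continuity
        · continuity
        · intro s
          have := hr s
          positivity
      · intro s
        have h1 : 0 < δ + ‖w₀‖ ^ 2 * Real.exp (-2 * α₁ * s) := by
          have := hr s; positivity
        have h2 : 0 < 1 + δ * (‖w₀‖ ^ 2 * Real.exp (-2 * α₁ * s)) := by
          have := hr s; positivity
        positivity
    have hφd : HasDerivAt φ (g t) t := by
      have := (hgcont.integral_hasStrictDerivAt 0 t).hasDerivAt
      apply this.congr_of_eventuallyEq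
      filter_upwards with s using (hφ s)
    -- derivative of the exponent
    have hexp :
        HasDerivAt (fun t : ℝ => ((-α₁ * t : ℝ) : ℂ) + Complex.I * (lam : ℂ) * (φ t : ℂ))
          ((-α₁ : ℂ) + Complex.I * (lam : ℂ) * (g t : ℂ)) t := by
      have h1 : HasDerivAt (fun t : ℝ => ((-α₁ * t : ℝ) : ℂ)) (-α₁ : ℂ) t := by
        have : HasDerivAt (fun t : ℝ => -α₁ * t) (-α₁) t := by
          simpa using (hasDerivAt_id t).const_mul (-α₁)
        exact_mod_cast this.ofReal_comp
      have h2 : HasDerivAt (fun t : ℝ => ((φ t : ℝ) : ℂ)) ((g t : ℝ) : ℂ) t :=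
        hφd.ofReal_comp
      exact h1.add ((h2.const_mul (Complex.I * (lam : ℂ))).congr_deriv (by ring))
    have hwd : HasDerivAt w
        (((-α₁ : ℂ) + Complex.I * (lam : ℂ) * (g t : ℂ)) * w t) t := by
      have := (hexp.cexp.mul_const w₀)
      have heq : (fun t : ℝ =>
          Complex.exp ((-α₁ * t : ℝ) + Complex.I * (lam : ℂ) * (φ t : ℂ)) * w₀) = w := by
        funext s; exact (hw s).symm
      rw [heq] at this
      apply this.congr_deriv
      rw [hw t]; ring
    have hkey : fReg δ (‖w t‖ ^ 2) = g t := by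
      have h2 : (Real.exp (-α₁ * t) * ‖w₀‖) ^ 2
          = ‖w₀‖ ^ 2 * Real.exp (-2 * α₁ * t) := by
        rw [mul_pow, ← Real.exp_nat_mul]; ring
      rw [hnorm t, h2]
    rw [hkey]
    exact hwd.congr_deriv (by ring)
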